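/- Let l0, l1 be positive real numbers and a1 > 0. Then (l0 - l1)/(l0 + l1) ≠ -e^{(2+2i)a1/l0}, where e^w denotes the complex exponential and i the imaginary unit. -/

import Mathlib

open Complex

theorem one_jump_nondegeneracy (l0 l1 a1 : ℝ)
    (hl0 : 0 < l0) (hl1 : 0 < l1) (ha1 : 0 < a1) :
    (((l0 - l1) / (l0 + l1) : ℂ)) ≠ -Complex.exp ((2 + 2 * Complex.I) * a1 / l0) := by
  intro h
  have habs : ‖(((l0 - l1) / (l0 + l1) : ℂ))‖ =
      ‖(-Complex.exp ((2 + 2 * Complex.I) * a1 / l0))‖ := by rw [h]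
  have h1 : ‖(((l0 - l1) / (l0 + l1) : ℂ))‖ < 1 := by
    have : ((l0 - l1) / (l0 + l1) : ℂ) = (((l0 - l1) / (l0 + l1) : ℝ) : ℂ) := by
      push_cast; ring
    rw [this, Complex.norm_real, Real.norm_eq_abs, abs_div]
    rw [div_lt_one (by rw [abs_of_pos (by linarith)]; linarith)]
    rw [abs_of_pos (by linarith : (0:ℝ) < l0 + l1)]
    cases abs_cases (l0 - l1) with
    | inl hc => linarith [hc.1]
    | inr hc => linarith [hc.1]
  have hre : ((2 + 2 * Complex.I) * a1 / l0).re = 2 * a1 / l0 := by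
    simp [Complex.div_re, Complex.mul_re]
    field_simp
  have h2 : ‖(-Complex.exp ((2 + 2 * Complex.I) * a1 / l0))‖ = Real.exp (2 * a1 / l0) := by
    rw [norm_neg, Complex.norm_exp, hre]
  have h3 : (1:ℝ) < Real.exp (2 * a1 / l0) := by
    rw [Real.one_lt_exp_iff]; positivity
  rw [h2] at habs
  linarith
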